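/- Suppose P is symmetric positive definite, F monotone with zero set Z* nonempty, the iterates satisfy P(z_k - z_{k+1}) ∈ F(z_{k+1}), and metric sub-regularity holds on a set containing all iterates: α·dist_P(z, Z*) ≤ dist_{P^{-1}}(0, F(z)) for some α > 0. Then for all k ≥ ⌈e/α²⌉: dist²_{P^{-1}}(0, F(z_k)) ≤ exp(1 - k/⌈e/α²⌉) · dist²_{P^{-1}}(0, F(z_0)). -/

import Mathlib

open Matrix

/-- Quadratic form `⟨v, G v⟩`. -/
def qf {ι : Type*} [Fintype ι] (G : Matrix ι ι ℝ) (v : ι → ℝ) : ℝ := v ⬝ᵥ G.mulVec v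

/-- Squared distance (in the quadratic form of `G`) from `0` to a set `S`. -/
noncomputable def distSqTo {ι : Type*} [Fintype ι] (G : Matrix ι ι ℝ)
    (S : Set (ι → ℝ)) : ℝ := sInf (qf G '' S)

/-- Arithmetic core: geometric decay from the one-step contraction facts. -/
lemma aux9 (α : ℝ) (hα : 0 < α) (T : ℕ) (hT : 1 ≤ T)
    (hTα : Real.exp 1 ≤ (T : ℝ) * α ^ 2)
    (D r : ℕ → ℝ) (hD0 : ∀ k, 0 ≤ D k) (hr0 : 0 ≤ r 0)
    (hmonoD : ∀ i j, i ≤ j → D j ≤ D i)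
    (hkey : ∀ k m : ℕ, 1 ≤ m → m ≤ k → (m : ℝ) * r k ≤ D (k - m))
    (hDr : ∀ k, α ^ 2 * D k ≤ r k) :
    ∀ k : ℕ, T ≤ k → r k ≤ Real.exp (1 - (k : ℝ) / (T : ℝ)) * r 0 := by
  have hT0 : 0 < T := hT
  have hTr : (0 : ℝ) < (T : ℝ) := by exact_mod_cast hT0
  have hgeo : ∀ j : ℕ, D (j * T) ≤ Real.exp (-(j : ℝ)) * D 0 := by
    intro j
    induction j with
    | zero => simp
    | succ j ih =>
      have hle : T ≤ (j + 1) * T := Nat.le_mul_of_pos_left T j.succ_pos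
      have h1 : (T : ℝ) * r ((j + 1) * T) ≤ D ((j + 1) * T - T) := hkey _ T hT hle
      have hidx : (j + 1) * T - T = j * T := by rw [Nat.succ_mul, Nat.add_sub_cancel]
      rw [hidx] at h1
      have h2 := hDr ((j + 1) * T)
      have hD' := hD0 ((j + 1) * T)
      have h3 : Real.exp 1 * D ((j + 1) * T) ≤ Real.exp (-(j : ℝ)) * D 0 := by
        nlinarith [h1, h2, ih, hD', hTα, hTr]
      have h4 : D ((j + 1) * T) ≤ Real.exp (-(j : ℝ)) * D 0 / Real.exp 1 :=
        (le_div_iff₀ (Real.exp_pos 1)).2 (by linarith)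
      have h5 : Real.exp (-((j : ℝ) + 1)) * D 0 = Real.exp (-(j : ℝ)) * D 0 / Real.exp 1 := by
        rw [show -((j : ℝ) + 1) = -(j : ℝ) - 1 by ring, Real.exp_sub]
        ring
      have : (((j + 1 : ℕ)) : ℝ) = (j : ℝ) + 1 := by push_cast; ring
      rw [this, h5]
      exact h4
  intro k hk
  set j := k / T with hj
  have hj1 : 1 ≤ j := (Nat.one_le_div_iff hT0).2 hk
  have hjk : j * T ≤ k := Nat.div_mul_le_self k T
  have hk2 : k < (j + 1) * T := by
    by_contra h
    push_neg at h
    have : j + 1 ≤ j := hj ▸ (Nat.le_div_iff_mul_le hT0).2 h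
    omega
  have h1 : (T : ℝ) * r k ≤ D (k - T) := hkey k T hT hk
  have h2 : D (k - T) ≤ D ((j - 1) * T) := by
    refine hmonoD _ _ ?_
    rw [Nat.sub_one_mul]
    exact Nat.sub_le_sub_right hjk T
  have h3 : D ((j - 1) * T) ≤ Real.exp (-(((j - 1 : ℕ)) : ℝ)) * D 0 := hgeo (j - 1)
  have hcast : (((j - 1 : ℕ)) : ℝ) = (j : ℝ) - 1 := by
    push_cast [hj1]; ring
  rw [hcast] at h3
  have h4 : α ^ 2 * D 0 ≤ r 0 := hDr 0
  have hA : (T : ℝ) * r k ≤ Real.exp (-((j : ℝ) - 1)) * D 0 := by linarith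
  have hq : (0 : ℝ) < α ^ 2 := by positivity
  have hB : D 0 ≤ r 0 / α ^ 2 := (le_div_iff₀ hq).2 (by linarith)
  have hC : (T : ℝ) * r k ≤ Real.exp (-((j : ℝ) - 1)) * (r 0 / α ^ 2) :=
    le_trans hA (mul_le_mul_of_nonneg_left hB (Real.exp_pos _).le)
  rw [show -((j : ℝ) - 1) = -(j : ℝ) + 1 by ring, Real.exp_add] at hC
  have ha : (0 : ℝ) < Real.exp (-(j : ℝ)) := Real.exp_pos _
  have e1 : Real.exp (-(j : ℝ)) * Real.exp 1 * (r 0 / α ^ 2)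
      ≤ Real.exp (-(j : ℝ)) * ((T : ℝ) * α ^ 2) * (r 0 / α ^ 2) := by
    apply mul_le_mul_of_nonneg_right _ (div_nonneg hr0 hq.le)
    exact mul_le_mul_of_nonneg_left hTα ha.le
  have e2 : Real.exp (-(j : ℝ)) * ((T : ℝ) * α ^ 2) * (r 0 / α ^ 2)
      = (T : ℝ) * (Real.exp (-(j : ℝ)) * r 0) := by
    field_simp
  have hD : r k ≤ Real.exp (-(j : ℝ)) * r 0 := by
    have : (T : ℝ) * r k ≤ (T : ℝ) * (Real.exp (-(j : ℝ)) * r 0) := by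
      calc (T : ℝ) * r k ≤ Real.exp (-(j : ℝ)) * Real.exp 1 * (r 0 / α ^ 2) := hC
        _ ≤ Real.exp (-(j : ℝ)) * ((T : ℝ) * α ^ 2) * (r 0 / α ^ 2) := e1
        _ = (T : ℝ) * (Real.exp (-(j : ℝ)) * r 0) := e2
    exact le_of_mul_le_mul_left this hTr
  have hexp : Real.exp (-(j : ℝ)) ≤ Real.exp (1 - (k : ℝ) / (T : ℝ)) := by
    apply Real.exp_le_exp.2
    have : (k : ℝ) ≤ ((j : ℝ) + 1) * (T : ℝ) := by
      have := hk2.le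
      exact_mod_cast this
    have hdiv : (k : ℝ) / (T : ℝ) ≤ (j : ℝ) + 1 := (div_le_iff₀ hTr).2 (by linarith)
    linarith
  calc r k ≤ Real.exp (-(j : ℝ)) * r 0 := hD
    _ ≤ Real.exp (1 - (k : ℝ) / (T : ℝ)) * r 0 := mul_le_mul_of_nonneg_right hexp hr0

/-- Linear convergence of IDS under metric sub-regularity. -/
theorem stmt9 {d : ℕ} (P : Matrix (Fin d) (Fin d) ℝ) (hP : P.PosDef)
    (F : (Fin d → ℝ) → Set (Fin d → ℝ))
    (hmono : ∀ z z' u v, u ∈ F z → v ∈ F z' → 0 ≤ (u - v) ⬝ᵥ (z - z'))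
    (hclosed : ∀ z, IsClosed (F z)) (hconvex : ∀ z, Convex ℝ (F z))
    (hZ : {u : Fin d → ℝ | (0 : Fin d → ℝ) ∈ F u}.Nonempty)
    (z : ℕ → Fin d → ℝ)
    (hstep : ∀ i, P.mulVec (z i - z (i+1)) ∈ F (z (i+1)))
    (hne : (F (z 0)).Nonempty)
    (α : ℝ) (hα : 0 < α)
    (hreg : ∀ k : ℕ,
      α * Real.sqrt (distSqTo P ((fun u => z k - u) '' {u | (0 : Fin d → ℝ) ∈ F u}))
        ≤ Real.sqrt (distSqTo P⁻¹ (F (z k)))) :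
    ∀ k : ℕ, ⌈Real.exp 1 / α ^ 2⌉₊ ≤ k →
      distSqTo P⁻¹ (F (z k)) ≤
        Real.exp (1 - (k : ℝ) / (⌈Real.exp 1 / α ^ 2⌉₊ : ℝ)) * distSqTo P⁻¹ (F (z 0)) := by
  classical
  set Zs : Set (Fin d → ℝ) := {u : Fin d → ℝ | (0 : Fin d → ℝ) ∈ F u} with hZsdef
  set D : ℕ → ℝ := fun k => distSqTo P ((fun u => z k - u) '' Zs) with hDdef
  set r : ℕ → ℝ := fun k => distSqTo P⁻¹ (F (z k)) with hrdef
  -- basic matrix facts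
  have ht : Pᵀ = P := by
    have := hP.1.eq
    simpa [Matrix.conjTranspose_eq_transpose_of_trivial] using this
  have hsym : ∀ u v : Fin d → ℝ, u ⬝ᵥ P.mulVec v = v ⬝ᵥ P.mulVec u := fun u v => by
    rw [dotProduct_mulVec, dotProduct_comm, ← mulVec_transpose, ht]
  have hpos : ∀ v, 0 ≤ qf P v := fun v => by simpa [qf] using hP.posSemidef.dotProduct_mulVec_nonneg v
  have hposInv : ∀ v, 0 ≤ qf P⁻¹ v := fun v => by simpa [qf] using hP.inv.posSemidef.dotProduct_mulVec_nonneg v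
  have hqfP : ∀ v, qf P⁻¹ (P.mulVec v) = qf P v := fun v => by
    unfold qf
    rw [mulVec_mulVec, Matrix.nonsing_inv_mul _ (isUnit_iff_ne_zero.2 hP.det_pos.ne'),
      one_mulVec]
    exact dotProduct_comm _ _
  have hexpand : ∀ a b : Fin d → ℝ,
      qf P (a + b) = qf P a + 2 * (a ⬝ᵥ P.mulVec b) + qf P b := fun a b => by
    simp only [qf, Matrix.mulVec_add, dotProduct_add, add_dotProduct]
    rw [hsym b a]; ring
  have hexpand' : ∀ a b : Fin d → ℝ,
      qf P (a - b) = qf P a - 2 * (a ⬝ᵥ P.mulVec b) + qf P b := fun a b => by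
    simp only [qf, Matrix.mulVec_sub, dotProduct_sub, sub_dotProduct]
    rw [hsym b a]; ring
  -- nonemptiness and sInf facts
  have hFne : ∀ k, (F (z k)).Nonempty := by
    intro k
    cases k with
    | zero => exact hne
    | succ i => exact ⟨_, hstep i⟩
  have r_le : ∀ k, ∀ w ∈ F (z k), r k ≤ qf P⁻¹ w := by
    intro k w hw
    refine csInf_le ⟨0, ?_⟩ ⟨w, hw, rfl⟩
    rintro x ⟨v, _, rfl⟩
    exact hposInv v
  have r_nonneg : ∀ k, 0 ≤ r k := by
    intro k
    refine Real.sInf_nonneg ?_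
    rintro x ⟨v, _, rfl⟩
    exact hposInv v
  have D_le : ∀ k, ∀ u ∈ Zs, D k ≤ qf P (z k - u) := by
    intro k u hu
    refine csInf_le ⟨0, ?_⟩ ⟨z k - u, ⟨u, hu, rfl⟩, rfl⟩
    rintro x ⟨v, _, rfl⟩
    exact hpos v
  have le_D : ∀ k (c : ℝ), (∀ u ∈ Zs, c ≤ qf P (z k - u)) → c ≤ D k := by
    intro k c h
    obtain ⟨u0, hu0⟩ := hZ
    refine le_csInf ⟨qf P (z k - u0), ⟨z k - u0, ⟨u0, hu0, rfl⟩, rfl⟩⟩ ?_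
    rintro x ⟨v, ⟨u, hu, rfl⟩, rfl⟩
    exact h u hu
  have D_nonneg : ∀ k, 0 ≤ D k := by
    intro k
    refine Real.sInf_nonneg ?_
    rintro x ⟨v, _, rfl⟩
    exact hpos v
  -- Fejér inequality
  have hfej : ∀ i, ∀ u ∈ Zs, qf P (z (i+1) - u) + qf P (z i - z (i+1)) ≤ qf P (z i - u) := by
    intro i u hu
    have h1 : 0 ≤ (P.mulVec (z i - z (i+1)) - 0) ⬝ᵥ (z (i+1) - u) :=
      hmono (z (i+1)) u _ 0 (hstep i) hu
    rw [sub_zero] at h1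
    have h1' : 0 ≤ (z (i+1) - u) ⬝ᵥ P.mulVec (z i - z (i+1)) := by
      rwa [dotProduct_comm] at h1
    have h2 : z i - u = (z (i+1) - u) + (z i - z (i+1)) := by abel
    rw [h2, hexpand]
    linarith
  -- step sizes are nonincreasing
  have hd : ∀ i, qf P (z (i+1) - z (i+2)) ≤ qf P (z i - z (i+1)) := by
    intro i
    have h1 : 0 ≤ (P.mulVec (z i - z (i+1)) - P.mulVec (z (i+1) - z (i+2)))
        ⬝ᵥ (z (i+1) - z (i+2)) := hmono (z (i+1)) (z (i+2)) _ _ (hstep i) (hstep (i+1))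
    have h1' : qf P (z (i+1) - z (i+2))
        ≤ (z i - z (i+1)) ⬝ᵥ P.mulVec (z (i+1) - z (i+2)) := by
      have e : (P.mulVec (z i - z (i+1)) - P.mulVec (z (i+1) - z (i+2)))
          ⬝ᵥ (z (i+1) - z (i+2))
          = (z i - z (i+1)) ⬝ᵥ P.mulVec (z (i+1) - z (i+2)) - qf P (z (i+1) - z (i+2)) := by
        rw [sub_dotProduct]
        rw [dotProduct_comm (P.mulVec (z i - z (i+1))) _, hsym]
        rw [dotProduct_comm (P.mulVec (z (i+1) - z (i+2))) _]
        rfl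
      rw [e] at h1
      linarith
    have h2 : 0 ≤ qf P ((z i - z (i+1)) - (z (i+1) - z (i+2))) := hpos _
    rw [hexpand'] at h2
    linarith
  have g_anti : ∀ i j : ℕ, i ≤ j → qf P (z j - z (j+1)) ≤ qf P (z i - z (i+1)) := by
    intro i j hij
    exact antitone_nat_of_succ_le (f := fun i => qf P (z i - z (i+1))) hd hij
  -- summed Fejér
  have hchain : ∀ m : ℕ, ∀ n, ∀ u ∈ Zs,
      qf P (z (n+m) - u) + (m : ℝ) * qf P (z (n+m) - z (n+m+1)) ≤ qf P (z n - u) := by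
    intro m
    induction m with
    | zero => intro n u hu; simp
    | succ m ih =>
      intro n u hu
      have h1 := ih (n+1) u hu
      have h2 := hfej n u hu
      have h3 : qf P (z (n+(m+1)) - z (n+(m+1)+1)) ≤ qf P (z n - z (n+1)) :=
        g_anti n (n+(m+1)) (by omega)
      have he : n+1+m = n+(m+1) := by omega
      rw [he] at h1
      push_cast
      linarith
  -- key sublinear bound
  have hkey : ∀ k m : ℕ, 1 ≤ m → m ≤ k → (m : ℝ) * r k ≤ D (k - m) := by
    intro k m h1 h2
    have hk1 : k - 1 + 1 = k := Nat.sub_add_cancel (le_trans h1 h2)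
    have hw : P.mulVec (z (k-1) - z k) ∈ F (z k) := by
      have := hstep (k-1)
      rwa [hk1] at this
    have hr : r k ≤ qf P (z (k-1) - z k) := by
      have := r_le k _ hw
      rwa [hqfP] at this
    have hmain : (m : ℝ) * qf P (z (k-1) - z k) ≤ D (k - m) := by
      refine le_D (k - m) _ ?_
      intro u hu
      have h4 := hchain (m-1) (k-m) u hu
      have he1 : k - m + (m-1) = k - 1 := by omega
      have he2 : k - m + (m-1) + 1 = k := by omega
      rw [he1] at h4
      -- h4 : qf P (z (k-1) - u) + (m-1) * qf P (z (k-1) - z (k-1+1)) ≤ qf P (z (k-m) - u)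
      rw [show k - m + (m-1) = k - 1 from he1] at he2
      rw [he2] at h4
      have h5 := hfej (k-1) u hu
      rw [hk1] at h5
      have hc : ((m-1 : ℕ) : ℝ) = (m : ℝ) - 1 := by push_cast [h1]; ring
      rw [hc] at h4
      have h6 : 0 ≤ qf P (z k - u) := hpos _
      nlinarith [h4, h5, h6]
    calc (m : ℝ) * r k ≤ (m : ℝ) * qf P (z (k-1) - z k) := by
          apply mul_le_mul_of_nonneg_left hr
          exact_mod_cast Nat.zero_le m
      _ ≤ D (k - m) := hmain
  -- sub-regularity squared
  have hDr : ∀ k, α ^ 2 * D k ≤ r k := by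
    intro k
    have h : α * Real.sqrt (D k) ≤ Real.sqrt (r k) := hreg k
    have h1 : 0 ≤ D k := D_nonneg k
    have h2 : 0 ≤ r k := r_nonneg k
    have e1 : Real.sqrt (D k) ^ 2 = D k := Real.sq_sqrt h1
    have e2 : Real.sqrt (r k) ^ 2 = r k := Real.sq_sqrt h2
    have h3 := pow_le_pow_left₀ (by positivity) h 2
    calc α ^ 2 * D k = (α * Real.sqrt (D k)) ^ 2 := by rw [mul_pow, e1]
      _ ≤ Real.sqrt (r k) ^ 2 := h3
      _ = r k := e2
  -- D is nonincreasing
  have hmonoD : ∀ i j : ℕ, i ≤ j → D j ≤ D i := by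
    have step : ∀ i, D (i+1) ≤ D i := by
      intro i
      refine le_D i _ ?_
      intro u hu
      have h1 := hfej i u hu
      have h2 := D_le (i+1) u hu
      have h3 := hpos (z i - z (i+1))
      linarith
    intro i j hij
    exact antitone_nat_of_succ_le step hij
  -- ceiling constant
  set T : ℕ := ⌈Real.exp 1 / α ^ 2⌉₊ with hTdef
  have hq : (0 : ℝ) < α ^ 2 := by positivity
  have hT1 : 1 ≤ T := by
    rw [hTdef, Nat.one_le_ceil_iff]
    positivity
  have hTα : Real.exp 1 ≤ (T : ℝ) * α ^ 2 := by
    have := Nat.le_ceil (Real.exp 1 / α ^ 2)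
    rw [← hTdef] at this
    calc Real.exp 1 = Real.exp 1 / α ^ 2 * α ^ 2 := by field_simp
      _ ≤ (T : ℝ) * α ^ 2 := mul_le_mul_of_nonneg_right this hq.le
  exact aux9 α hα T hT1 hTα D r D_nonneg (r_nonneg 0) hmonoD hkey hDr
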